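/- arXiv:1311.7170 — 6 statements merged into one kernel-verified Lean document; each statement's English description precedes it below -/
import Mathlib

section
/- By induction from the leaf lines of a tree network: if S_ij ≤ s_i + Σ_{h→i} S_hi for every line (i,j) (componentwise in real and imaginary parts), and Ŝ_ij = s_i + Σ_{h→i} Ŝ_hi for every line (i,j), then S_ij ≤ Ŝ_ij for every line (i,j). Moreover Ŝ_ij = Σ_{h : i ∈ P_h} s_h. -/
open Classical Finset

noncomputable section

/-- Bus `i` lies on the path `P_h` from bus `h` to the root. -/
def onPath (par : ℕ → ℕ) (i h : ℕ) : Prop := ∃ k, par^[k] h = i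

/-- Induction from the leaf lines of a tree: if `S_{ij} ≤ s_i + Σ_{h→i} S_{hi}` componentwise
(in real and imaginary parts) for every line, and `Ŝ_{ij} = s_i + Σ_{h→i} Ŝ_{hi}` for every
line, then `S_{ij} ≤ Ŝ_{ij}` for every line; moreover `Ŝ_{ij} = Σ_{h : i ∈ P_h} s_h`. -/
theorem hatS_dominates (n : ℕ) (par : ℕ → ℕ)
    (hpar0 : par 0 = 0) (hpar : ∀ i, 1 ≤ i → par i < i)
    (s S Shat : ℕ → ℂ)
    (hS : ∀ i, 1 ≤ i → i ≤ n →
      (S i).re ≤ (s i + ∑ h ∈ (Finset.Icc 1 n).filter (fun h => par h = i), S h).re ∧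
      (S i).im ≤ (s i + ∑ h ∈ (Finset.Icc 1 n).filter (fun h => par h = i), S h).im)
    (hShat : ∀ i, 1 ≤ i → i ≤ n →
      Shat i = s i + ∑ h ∈ (Finset.Icc 1 n).filter (fun h => par h = i), Shat h) :
    ∀ i, 1 ≤ i → i ≤ n →
      ((S i).re ≤ (Shat i).re ∧ (S i).im ≤ (Shat i).im) ∧
      Shat i = ∑ h ∈ (Finset.Icc 1 n).filter (fun h => onPath par i h), s h := by
  have par_le : ∀ h, par h ≤ h := by
    intro h
    rcases Nat.eq_zero_or_pos h with rfl | hh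
    · simp [hpar0]
    · exact (hpar h hh).le
  have iter_le : ∀ k h, par^[k] h ≤ h := by
    intro k
    induction k with
    | zero => simp
    | succ k ih =>
      intro h
      rw [Function.iterate_succ_apply]
      exact (ih (par h)).trans (par_le h)
  suffices H : ∀ d i, n + 1 - i ≤ d → 1 ≤ i → i ≤ n →
      ((S i).re ≤ (Shat i).re ∧ (S i).im ≤ (Shat i).im) ∧
      Shat i = ∑ h ∈ (Finset.Icc 1 n).filter (fun h => onPath par i h), s h by
    exact fun i h1 h2 => H (n + 1 - i) i le_rfl h1 h2
  intro d
  induction d with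
  | zero => intro i hd h1 h2; omega
  | succ d ih =>
    intro i hd h1 h2
    set C := (Finset.Icc 1 n).filter (fun h => par h = i) with hC
    have hchild : ∀ c ∈ C, i < c ∧ 1 ≤ c ∧ c ≤ n := by
      intro c hc
      rw [hC, Finset.mem_filter, Finset.mem_Icc] at hc
      obtain ⟨⟨hc1, hc2⟩, hc3⟩ := hc
      exact ⟨hc3 ▸ hpar c hc1, hc1, hc2⟩
    have IH : ∀ c ∈ C, ((S c).re ≤ (Shat c).re ∧ (S c).im ≤ (Shat c).im) ∧
        Shat c = ∑ h ∈ (Finset.Icc 1 n).filter (fun h => onPath par c h), s h := by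
      intro c hc
      obtain ⟨hic, hc1, hc2⟩ := hchild c hc
      exact ih c (by omega) hc1 hc2
    -- disjointness of descendant sets of distinct children
    have aux : ∀ (h k k' c : ℕ), k < k' → par^[k] h = c → par c = i → par^[k'] h ≤ i := by
      intro h k k' c hkk hk hpc
      have e1 : par (par^[k] h) = par^[k + 1] h := (Function.iterate_succ_apply' par k h).symm
      have e : par^[k'] h = par^[k' - k - 1] (par (par^[k] h)) := by
        rw [e1, ← Function.iterate_add_apply]
        congr 1
        omega
      rw [e, hk, hpc]
      exact iter_le _ _
    have hdisj : ∀ c ∈ C, ∀ c' ∈ C, c ≠ c' → ∀ h, onPath par c h → onPath par c' h → False := by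
      rintro c hc c' hc' hne h ⟨k, hk⟩ ⟨k', hk'⟩
      have hCc := hchild c hc
      have hCc' := hchild c' hc'
      have hpc : par c = i := by rw [hC, Finset.mem_filter] at hc; exact hc.2
      have hpc' : par c' = i := by rw [hC, Finset.mem_filter] at hc'; exact hc'.2
      rcases lt_trichotomy k k' with h1 | h1 | h1
      · have := aux h k k' c h1 hk hpc
        rw [hk'] at this
        omega
      · rw [h1, hk'] at hk
        exact hne hk.symm
      · have := aux h k' k c' h1 hk' hpc'
        rw [hk] at this
        omega
    have hdecomp : (Finset.Icc 1 n).filter (fun h => onPath par i h) =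
        insert i (C.biUnion (fun c => (Finset.Icc 1 n).filter (fun h => onPath par c h))) := by
      ext h
      simp only [Finset.mem_insert, Finset.mem_biUnion, Finset.mem_filter, Finset.mem_Icc]
      constructor
      · rintro ⟨⟨hh1, hh2⟩, k, hk⟩
        by_cases hhi : h = i
        · exact Or.inl hhi
        · right
          cases k with
          | zero => exact absurd hk hhi
          | succ k =>
            rw [Function.iterate_succ_apply'] at hk
            have hk1 : 1 ≤ par^[k] h := by
              rcases Nat.eq_zero_or_pos (par^[k] h) with h0 | h0
              · rw [h0, hpar0] at hk; omega
              · exact h0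
            refine ⟨par^[k] h, ?_, ⟨hh1, hh2⟩, k, rfl⟩
            rw [hC, Finset.mem_filter, Finset.mem_Icc]
            exact ⟨⟨hk1, (iter_le k h).trans hh2⟩, hk⟩
      · rintro (rfl | ⟨c, hcC, ⟨hh1, hh2⟩, k, hk⟩)
        · exact ⟨⟨h1, h2⟩, 0, rfl⟩
        · have hpc : par c = i := by rw [hC, Finset.mem_filter] at hcC; exact hcC.2
          exact ⟨⟨hh1, hh2⟩, k + 1, by rw [Function.iterate_succ_apply', hk, hpc]⟩
    have hnotmem : i ∉ C.biUnion (fun c => (Finset.Icc 1 n).filter (fun h => onPath par c h)) := by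
      intro hmem
      rw [Finset.mem_biUnion] at hmem
      obtain ⟨c, hcC, hic⟩ := hmem
      rw [Finset.mem_filter] at hic
      obtain ⟨k, hk⟩ := hic.2
      have := iter_le k i
      rw [hk] at this
      exact absurd this (not_le.mpr (hchild c hcC).1)
    have hShati : Shat i = s i + ∑ h ∈ C, Shat h := hShat i h1 h2
    constructor
    · obtain ⟨hre, him⟩ := hS i h1 h2
      rw [hShati]
      constructor
      · refine hre.trans ?_
        simp only [Complex.add_re, Complex.re_sum]
        exact add_le_add le_rfl (Finset.sum_le_sum fun c hc => (IH c hc).1.1)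
      · refine him.trans ?_
        simp only [Complex.add_im, Complex.im_sum]
        exact add_le_add le_rfl (Finset.sum_le_sum fun c hc => (IH c hc).1.2)
    · rw [hShati, hdecomp, Finset.sum_insert hnotmem,
        Finset.sum_biUnion (fun c hc c' hc' hne => Finset.disjoint_left.mpr
          (fun h hh hh' => hdisj c hc c' hc' hne h (Finset.mem_filter.mp hh).2
            (Finset.mem_filter.mp hh').2))]
      congr 1
      exact Finset.sum_congr rfl (fun c hc => (IH c hc).2)
end
end

section
/- Let m ≥ 1, d ≥ 1, and let A̲_1,...,A̲_{m−1}, A_1,...,A_{m−1} ∈ ℝ^{d×d} and u_1,...,u_m ∈ ℝ^d satisfy: (a) A̲_s A̲_{s+1} ⋯ A̲_{t−1} u_t > 0 componentwise whenever 1 ≤ s ≤ t ≤ m; (b) for each k = 1,...,m−1 there exists b_k ∈ ℝ^d with b_k ≥ 0 componentwise such that A_k − A̲_k = u_k b_kᵀ. Then A_s A_{s+1} ⋯ A_{t−1} u_t > 0 componentwise whenever 1 ≤ s ≤ t ≤ m. -/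
noncomputable section

/-- Product `A s * A (s+1) * ⋯ * A (t-1)` applied to the vector `u`
(the empty product, when `s ≥ t`, is the identity). -/
def chainA (d : ℕ) (A : ℕ → Matrix (Fin d) (Fin d) ℝ) (s t : ℕ) (u : Fin d → ℝ) :
    Fin d → ℝ :=
  if _ : s < t then (A s).mulVec (chainA d A (s + 1) t u) else u
termination_by t - s

theorem chainA_self (d : ℕ) (A : ℕ → Matrix (Fin d) (Fin d) ℝ) (s : ℕ) (u : Fin d → ℝ) :
    chainA d A s s u = u := by
  rw [chainA]; simp

theorem chainA_step (d : ℕ) (A : ℕ → Matrix (Fin d) (Fin d) ℝ) {s t : ℕ} (h : s < t)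
    (u : Fin d → ℝ) : chainA d A s t u = (A s).mulVec (chainA d A (s + 1) t u) := by
  rw [chainA]; simp [h]

/-- Lemma 3: if `A̲_s ⋯ A̲_{t-1} u_t > 0` componentwise whenever `1 ≤ s ≤ t ≤ m`, and each
`A_k − A̲_k = u_k b_kᵀ` for some componentwise nonnegative `b_k` (`k = 1,…,m−1`), then
`A_s ⋯ A_{t-1} u_t > 0` componentwise whenever `1 ≤ s ≤ t ≤ m`. -/
theorem matrix_chain_positive (m d : ℕ) (hm : 1 ≤ m) (hd : 1 ≤ d)
    (Aund A : ℕ → Matrix (Fin d) (Fin d) ℝ) (u : ℕ → Fin d → ℝ)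
    (hund : ∀ s t, 1 ≤ s → s ≤ t → t ≤ m → ∀ a, 0 < chainA d Aund s t (u t) a)
    (hb : ∀ k, 1 ≤ k → k ≤ m - 1 → ∃ b : Fin d → ℝ, (∀ a, 0 ≤ b a) ∧
      A k - Aund k = Matrix.of (fun i j => u k i * b j)) :
    ∀ s t, 1 ≤ s → s ≤ t → t ≤ m → ∀ a, 0 < chainA d A s t (u t) a := by
  have key : ∀ n s t, t - s = n → 1 ≤ s → s ≤ t → t ≤ m →
      ∃ c : ℕ → ℝ, (∀ k, 0 ≤ c k) ∧
        chainA d A s t (u t) = chainA d Aund s t (u t)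
          + ∑ k ∈ Finset.Ico s t, c k • chainA d Aund s k (u k) := by
    intro n
    induction n with
    | zero =>
      intro s t hn h1 hst htm
      have hts : s = t := by omega
      subst hts
      refine ⟨0, fun k => le_refl 0, ?_⟩
      simp [chainA_self]
    | succ n ih =>
      intro s t hn h1 hst htm
      have hlt : s < t := by omega
      obtain ⟨c, hc, hch⟩ := ih (s + 1) t (by omega) (by omega) (by omega) htm
      set w := chainA d A (s + 1) t (u t) with hwdef
      have hwpos : ∀ a, 0 < w a := by
        intro a
        rw [hch]
        have h0 : 0 < chainA d Aund (s + 1) t (u t) a :=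
          hund (s + 1) t (by omega) (by omega) htm a
        have hnn : ∀ k ∈ Finset.Ico (s + 1) t,
            0 ≤ (c k • chainA d Aund (s + 1) k (u k)) a := by
          intro k hk
          simp only [Finset.mem_Ico] at hk
          exact mul_nonneg (hc k)
            (le_of_lt (hund (s + 1) k (by omega) (by omega) (by omega) a))
        have := Finset.sum_nonneg hnn
        simp only [Pi.add_apply, Finset.sum_apply] at *
        linarith
      obtain ⟨b, hb0, hAb⟩ := hb s h1 (by omega)
      have hAs : A s = Aund s + Matrix.of (fun i j => u s i * b j) := by
        rw [← hAb]; abel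
      set β : ℝ := ∑ j, b j * w j with hβdef
      have hβ : 0 ≤ β := Finset.sum_nonneg fun j _ =>
        mul_nonneg (hb0 j) (le_of_lt (hwpos j))
      have hmul : (A s).mulVec w = (Aund s).mulVec w + β • u s := by
        funext a
        rw [hAs]
        simp only [Matrix.add_mulVec, Pi.add_apply, Pi.smul_apply, smul_eq_mul]
        congr 1
        simp only [Matrix.mulVec, dotProduct, Matrix.of_apply, hβdef,
          Finset.mul_sum]
        rw [Finset.sum_mul]
        exact Finset.sum_congr rfl fun j _ => by ring
      have expand : (Aund s).mulVec w = chainA d Aund s t (u t)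
          + ∑ k ∈ Finset.Ico (s + 1) t, c k • chainA d Aund s k (u k) := by
        have hlin : ∀ v : Fin d → ℝ, (Aund s).mulVec v = (Aund s).mulVecLin v :=
          fun v => rfl
        rw [hch, chainA_step d Aund hlt]
        simp only [hlin]
        rw [map_add, map_sum]
        congr 1
        apply Finset.sum_congr rfl
        intro k hk
        simp only [Finset.mem_Ico] at hk
        rw [map_smul, chainA_step d Aund (show s < k by omega)]
        rfl
      refine ⟨fun k => if k = s then β else c k, ?_, ?_⟩
      · intro k
        by_cases h : k = s <;> simp [h, hβ, hc k]
      · rw [chainA_step d A hlt, ← hwdef, hmul, expand]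
        have hsplit : (∑ k ∈ Finset.Ico s t,
            (fun k => if k = s then β else c k) k • chainA d Aund s k (u k))
            = β • u s + ∑ k ∈ Finset.Ico (s + 1) t, c k • chainA d Aund s k (u k) := by
          rw [Finset.sum_eq_sum_Ico_succ_bot hlt]
          simp only [if_pos rfl, chainA_self]
          congr 1
          apply Finset.sum_congr rfl
          intro k hk
          simp only [Finset.mem_Ico] at hk
          rw [if_neg (by omega)]
        rw [hsplit]
        abel
  intro s t h1 hst htm a
  obtain ⟨c, hc, hch⟩ := key (t - s) s t rfl h1 hst htm
  rw [hch]
  have h0 : 0 < chainA d Aund s t (u t) a := hund s t h1 hst htm a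
  have hnn : ∀ k ∈ Finset.Ico s t, 0 ≤ (c k • chainA d Aund s k (u k)) a := by
    intro k hk
    simp only [Finset.mem_Ico] at hk
    exact mul_nonneg (hc k)
      (le_of_lt (hund s k h1 hk.1 (by omega) a))
  have := Finset.sum_nonneg hnn
  simp only [Pi.add_apply, Finset.sum_apply] at *
  linarith
end
end

section
/- Let i ≥ 1 and let c, d, e, f ∈ ℝ^i satisfy 0 < c_j ≤ 1, d_j ≥ 0, e_j ≥ 0, 0 < f_j ≤ 1 for all j, and let u ∈ ℝ² with u > 0 componentwise. If the matrix [[∏_{j=1}^i c_j, −Σ_{j=1}^i d_j], [−Σ_{j=1}^i e_j, ∏_{j=1}^i f_j]] applied to u is componentwise strictly positive, then for every j ∈ {1,...,i} the product of matrices M_j M_{j+1} ⋯ M_i applied to u is componentwise strictly positive, where M_k = [[c_k, −d_k], [−e_k, f_k]]. -/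
open Finset

noncomputable section

/-- Product `M s * M (s+1) * ⋯ * M (t-1)` applied to the vector `u`
(the empty product, when `s ≥ t`, is the identity). -/
def chainM (M : ℕ → Matrix (Fin 2) (Fin 2) ℝ) (s t : ℕ) (u : Fin 2 → ℝ) : Fin 2 → ℝ :=
  if _ : s < t then (M s).mulVec (chainM M (s + 1) t u) else u
termination_by t - s

/-- Lemma 7: let `0 < c_j ≤ 1`, `d_j ≥ 0`, `e_j ≥ 0`, `0 < f_j ≤ 1` for `j = 1,…,i` and
`u ∈ ℝ²` with `u > 0` componentwise. If
`[[∏ c_j, −Σ d_j], [−Σ e_j, ∏ f_j]] u > 0` componentwise, then for every `j ∈ {1,…,i}` the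
product `M_j M_{j+1} ⋯ M_i u > 0` componentwise, where `M_k = [[c_k, −d_k], [−e_k, f_k]]`. -/
theorem product_matrix_positive (i : ℕ) (hi : 1 ≤ i) (c d e f : ℕ → ℝ)
    (hc : ∀ j, 1 ≤ j → j ≤ i → 0 < c j ∧ c j ≤ 1)
    (hd : ∀ j, 1 ≤ j → j ≤ i → 0 ≤ d j)
    (he : ∀ j, 1 ≤ j → j ≤ i → 0 ≤ e j)
    (hf : ∀ j, 1 ≤ j → j ≤ i → 0 < f j ∧ f j ≤ 1)
    (u : Fin 2 → ℝ) (hu : ∀ a, 0 < u a)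
    (hyp : ∀ a, 0 <
      (!![∏ j ∈ Finset.Icc 1 i, c j, -∑ j ∈ Finset.Icc 1 i, d j;
          -∑ j ∈ Finset.Icc 1 i, e j, ∏ j ∈ Finset.Icc 1 i, f j]).mulVec u a) :
    ∀ j, 1 ≤ j → j ≤ i →
      ∀ a, 0 < chainM (fun k => !![c k, -d k; -e k, f k]) j (i + 1) u a := by
  set M : ℕ → Matrix (Fin 2) (Fin 2) ℝ := fun k => !![c k, -d k; -e k, f k] with hM
  -- strict positivity of the "global" lower bound
  have hyp0 : 0 < (∏ k ∈ Icc 1 i, c k) * u 0 - (∑ k ∈ Icc 1 i, d k) * u 1 := by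
    have := hyp 0
    simp [Matrix.mulVec, dotProduct, Fin.sum_univ_two] at this
    linarith
  have hyp1 : 0 < (∏ k ∈ Icc 1 i, f k) * u 1 - (∑ k ∈ Icc 1 i, e k) * u 0 := by
    have := hyp 1
    simp [Matrix.mulVec, dotProduct, Fin.sum_univ_two] at this
    linarith
  -- monotonicity of products and sums over Icc j i ⊆ Icc 1 i
  have prodmono : ∀ (g : ℕ → ℝ), (∀ k, 1 ≤ k → k ≤ i → 0 < g k ∧ g k ≤ 1) →
      ∀ j, 1 ≤ j → j ≤ i + 1 → ∏ k ∈ Icc 1 i, g k ≤ ∏ k ∈ Icc j i, g k := by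
    intro g hg j hj1 hji
    have hsub : Icc j i ⊆ Icc 1 i := Finset.Icc_subset_Icc hj1 le_rfl
    rw [← Finset.prod_sdiff hsub]
    have h1 : ∏ k ∈ Icc 1 i \ Icc j i, g k ≤ 1 := by
      apply Finset.prod_le_one
      · intro k hk
        have hk' := Finset.mem_sdiff.mp hk
        have := Finset.mem_Icc.mp hk'.1
        exact (hg k this.1 this.2).1.le
      · intro k hk
        have hk' := Finset.mem_sdiff.mp hk
        have := Finset.mem_Icc.mp hk'.1
        exact (hg k this.1 this.2).2
    have h2 : 0 ≤ ∏ k ∈ Icc j i, g k := by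
      apply Finset.prod_nonneg
      intro k hk
      have := Finset.mem_Icc.mp hk
      exact (hg k (hj1.trans this.1) this.2).1.le
    exact mul_le_of_le_one_left h2 h1
  have summono : ∀ (g : ℕ → ℝ), (∀ k, 1 ≤ k → k ≤ i → 0 ≤ g k) →
      ∀ j, 1 ≤ j → j ≤ i + 1 → ∑ k ∈ Icc j i, g k ≤ ∑ k ∈ Icc 1 i, g k := by
    intro g hg j hj1 hji
    apply Finset.sum_le_sum_of_subset_of_nonneg (Finset.Icc_subset_Icc hj1 le_rfl)
    intro k hk _
    have := Finset.mem_Icc.mp hk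
    exact hg k this.1 this.2
  -- nonnegativity of products and sums
  have prodpos : ∀ (g : ℕ → ℝ), (∀ k, 1 ≤ k → k ≤ i → 0 < g k ∧ g k ≤ 1) →
      ∀ j, 1 ≤ j → 0 ≤ ∏ k ∈ Icc j i, g k := by
    intro g hg j hj1
    apply Finset.prod_nonneg
    intro k hk
    have := Finset.mem_Icc.mp hk
    exact (hg k (hj1.trans this.1) this.2).1.le
  have sumnn : ∀ (g : ℕ → ℝ), (∀ k, 1 ≤ k → k ≤ i → 0 ≤ g k) →
      ∀ j, 1 ≤ j → 0 ≤ ∑ k ∈ Icc j i, g k := by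
    intro g hg j hj1
    apply Finset.sum_nonneg
    intro k hk
    have := Finset.mem_Icc.mp hk
    exact hg k (hj1.trans this.1) this.2
  -- the key invariant, by downward induction
  have key : ∀ n j, j + n = i + 1 → 1 ≤ j →
      ((∏ k ∈ Icc j i, c k) * u 0 - (∑ k ∈ Icc j i, d k) * u 1 ≤ chainM M j (i+1) u 0) ∧
      ((∏ k ∈ Icc j i, f k) * u 1 - (∑ k ∈ Icc j i, e k) * u 0 ≤ chainM M j (i+1) u 1) ∧
      chainM M j (i+1) u 0 ≤ u 0 ∧ chainM M j (i+1) u 1 ≤ u 1 := by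
    intro n
    induction n with
    | zero =>
      intro j hj hj1
      have hji : j = i + 1 := by omega
      subst hji
      rw [chainM]
      simp [Finset.Icc_eq_empty_of_lt (Nat.lt_succ_self i)]
    | succ n ih =>
      intro j hj hj1
      have hji : j ≤ i := by omega
      have ihj := ih (j + 1) (by omega) (by omega)
      obtain ⟨ih0, ih1, ihu0, ihu1⟩ := ihj
      have hcj := hc j hj1 hji
      have hdj := hd j hj1 hji
      have hej := he j hj1 hji
      have hfj := hf j hj1 hji
      -- positivity of chainM M (j+1) (i+1) u from its lower bound
      have hpos0 : 0 < chainM M (j+1) (i+1) u 0 := by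
        have h1 := mul_le_mul_of_nonneg_right (prodmono c hc (j+1) (by omega) (by omega)) (hu 0).le
        have h2 := mul_le_mul_of_nonneg_right (summono d hd (j+1) (by omega) (by omega)) (hu 1).le
        linarith [ih0, hyp0]
      have hpos1 : 0 < chainM M (j+1) (i+1) u 1 := by
        have h1 := mul_le_mul_of_nonneg_right (prodmono f hf (j+1) (by omega) (by omega)) (hu 1).le
        have h2 := mul_le_mul_of_nonneg_right (summono e he (j+1) (by omega) (by omega)) (hu 0).le
        linarith [ih1, hyp1]
      -- unfold one step
      have hstep : chainM M j (i+1) u = (M j).mulVec (chainM M (j+1) (i+1) u) := by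
        rw [chainM]
        simp [Nat.lt_succ_of_le hji]
      have hv0 : chainM M j (i+1) u 0
          = c j * chainM M (j+1) (i+1) u 0 - d j * chainM M (j+1) (i+1) u 1 := by
        rw [hstep]
        simp [hM, Matrix.mulVec, dotProduct, Fin.sum_univ_two]
        ring
      have hv1 : chainM M j (i+1) u 1
          = f j * chainM M (j+1) (i+1) u 1 - e j * chainM M (j+1) (i+1) u 0 := by
        rw [hstep]
        simp [hM, Matrix.mulVec, dotProduct, Fin.sum_univ_two]
        ring
      -- product and sum splitting
      have hPc : ∏ k ∈ Icc j i, c k = c j * ∏ k ∈ Icc (j+1) i, c k := by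
        rw [← Finset.mul_prod_Ioc_eq_prod_Icc hji, Finset.Icc_add_one_left_eq_Ioc]
      have hPf : ∏ k ∈ Icc j i, f k = f j * ∏ k ∈ Icc (j+1) i, f k := by
        rw [← Finset.mul_prod_Ioc_eq_prod_Icc hji, Finset.Icc_add_one_left_eq_Ioc]
      have hSd : ∑ k ∈ Icc j i, d k = d j + ∑ k ∈ Icc (j+1) i, d k := by
        rw [← Finset.add_sum_Ioc_eq_sum_Icc hji, Finset.Icc_add_one_left_eq_Ioc]
      have hSe : ∑ k ∈ Icc j i, e k = e j + ∑ k ∈ Icc (j+1) i, e k := by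
        rw [← Finset.add_sum_Ioc_eq_sum_Icc hji, Finset.Icc_add_one_left_eq_Ioc]
      have hSd' : 0 ≤ ∑ k ∈ Icc (j+1) i, d k := sumnn d hd (j+1) (by omega)
      have hSe' : 0 ≤ ∑ k ∈ Icc (j+1) i, e k := sumnn e he (j+1) (by omega)
      refine ⟨?_, ?_, ?_, ?_⟩
      · rw [hv0, hPc, hSd]
        have h1 := mul_le_mul_of_nonneg_left ih0 hcj.1.le
        have h2 := mul_le_mul_of_nonneg_left ihu1 hdj
        have h3 : 0 ≤ (1 - c j) * ((∑ k ∈ Icc (j+1) i, d k) * u 1) :=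
          mul_nonneg (by linarith [hcj.2]) (mul_nonneg hSd' (hu 1).le)
        linarith [h1, h2, h3]
      · rw [hv1, hPf, hSe]
        have h1 := mul_le_mul_of_nonneg_left ih1 hfj.1.le
        have h2 := mul_le_mul_of_nonneg_left ihu0 hej
        have h3 : 0 ≤ (1 - f j) * ((∑ k ∈ Icc (j+1) i, e k) * u 0) :=
          mul_nonneg (by linarith [hfj.2]) (mul_nonneg hSe' (hu 0).le)
        linarith [h1, h2, h3]
      · rw [hv0]
        have h1 : 0 ≤ d j * chainM M (j+1) (i+1) u 1 := mul_nonneg hdj hpos1.le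
        have h2 : 0 ≤ (1 - c j) * chainM M (j+1) (i+1) u 0 :=
          mul_nonneg (by linarith [hcj.2]) hpos0.le
        linarith [h1, h2, ihu0]
      · rw [hv1]
        have h1 : 0 ≤ e j * chainM M (j+1) (i+1) u 0 := mul_nonneg hej hpos0.le
        have h2 : 0 ≤ (1 - f j) * chainM M (j+1) (i+1) u 1 :=
          mul_nonneg (by linarith [hfj.2]) hpos1.le
        linarith [h1, h2, ihu1]
  -- conclude
  intro j hj1 hji a
  have hk := key (i + 1 - j) j (by omega) hj1
  obtain ⟨h0, h1, _, _⟩ := hk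
  fin_cases a
  · show 0 < chainM M j (i + 1) u 0
    have hA := mul_le_mul_of_nonneg_right (prodmono c hc j hj1 (by omega)) (hu 0).le
    have hB := mul_le_mul_of_nonneg_right (summono d hd j hj1 (by omega)) (hu 1).le
    linarith [h0, hyp0]
  · show 0 < chainM M j (i + 1) u 1
    have hA := mul_le_mul_of_nonneg_right (prodmono f hf j hj1 (by omega)) (hu 1).le
    have hB := mul_le_mul_of_nonneg_right (summono e he j hj1 (by omega)) (hu 0).le
    linarith [h1, hyp1]
end
end

section
/- (Monotonicity of condition C1 in the injection bounds.) Fix a tree network with line parameters r_ij > 0, x_ij > 0 and voltage lower bounds v̲_i > 0. For bounds (p̄, q̄) define u_i = (r_ij, x_ij)ᵀ and A̲_i = I − (2/v̲_i) u_i (P̂⁺_ij(p̄), Q̂⁺_ij(q̄)) where P̂_ij(p̄) = Σ_{h : i∈P_h} p̄_h, Q̂_ij(q̄) = Σ_{h : i∈P_h} q̄_h and a⁺ = max{a,0}. Say C1 holds for (p̄,q̄) if A̲_{l_s} A̲_{l_{s+1}} ⋯ A̲_{l_{t−1}} u_{l_t} > 0 componentwise for every leaf l and all 1 ≤ s ≤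 t ≤ n_l, where l = l_{n_l} → ⋯ → l_1 → l_0 = 0 is the path from l to the root. Then: if (p̄, q̄) ≤ (p̄′, q̄′) componentwise and C1 holds for (p̄′, q̄′), then C1 holds for (p̄, q̄). -/
open Classical Finset

noncomputable section

/-- Product `A (bus s) * A (bus (s+1)) * ⋯ * A (bus (t-1))` applied to the vector `u`
(the empty product, when `s ≥ t`, is the identity). -/
def chainApply (A : ℕ → Matrix (Fin 2) (Fin 2) ℝ) (bus : ℕ → ℕ) (s t : ℕ)
    (u : Fin 2 → ℝ) : Fin 2 → ℝ :=
  if _ : s < t then (A (bus s)).mulVec (chainApply A bus (s + 1) t u) else u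
termination_by t - s

/-- Number of steps from bus `l` to the root `0` along the parent map `par`
(the depth `n_l` of bus `l` in the tree). -/
def depth (par : ℕ → ℕ) (l : ℕ) : ℕ :=
  if h : ∃ k, par^[k] l = 0 then Nat.find h else 0

/-- `P̂_{i,par i}(p) = Σ_{h : i ∈ P_h} p_h`, the linear-DistFlow power flow on line `(i, par i)`. -/
def hatP (n : ℕ) (par : ℕ → ℕ) (p : ℕ → ℝ) (i : ℕ) : ℝ :=
  ∑ h ∈ (Finset.Icc 1 n).filter (fun h => onPath par i h), p h

/-- The vector `u_i = (r_{i,par i}, x_{i,par i})ᵀ`. -/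
def uvec (r x : ℕ → ℝ) (i : ℕ) : Fin 2 → ℝ := ![r i, x i]

/-- The matrix `A̲_i = I − (2/v̲_i) u_i (P̂⁺_i(p̄), Q̂⁺_i(q̄))`. -/
def Amat (n : ℕ) (par : ℕ → ℕ) (r x vlow p q : ℕ → ℝ) (i : ℕ) :
    Matrix (Fin 2) (Fin 2) ℝ :=
  1 - (2 / vlow i) •
    Matrix.of (fun a b => uvec r x i a * ![max (hatP n par p i) 0, max (hatP n par q i) 0] b)

/-- A leaf bus: a bus in `{1,…,n}` with no children. -/
def IsLeaf (n : ℕ) (par : ℕ → ℕ) (l : ℕ) : Prop :=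
  1 ≤ l ∧ l ≤ n ∧ ∀ i, 1 ≤ i → i ≤ n → par i ≠ l

/-- Condition C1: `A̲_{l_s} ⋯ A̲_{l_{t-1}} u_{l_t} > 0` componentwise for every leaf `l`
and all `1 ≤ s ≤ t ≤ n_l`, where `l_k = par^[n_l − k] l`. -/
def C1 (n : ℕ) (par : ℕ → ℕ) (r x vlow p q : ℕ → ℝ) : Prop :=
  ∀ l, IsLeaf n par l → ∀ s t, 1 ≤ s → s ≤ t → t ≤ depth par l →
    ∀ a, 0 < chainApply (Amat n par r x vlow p q) (fun k => par^[depth par l - k] l) s t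
      (uvec r x (par^[depth par l - t] l)) a

lemma chainApply_of_not_lt (A : ℕ → Matrix (Fin 2) (Fin 2) ℝ) (bus : ℕ → ℕ) {s t : ℕ}
    (h : ¬ s < t) (u : Fin 2 → ℝ) : chainApply A bus s t u = u := by
  rw [chainApply, dif_neg h]

lemma chainApply_of_lt (A : ℕ → Matrix (Fin 2) (Fin 2) ℝ) (bus : ℕ → ℕ) {s t : ℕ}
    (h : s < t) (u : Fin 2 → ℝ) :
    chainApply A bus s t u = (A (bus s)).mulVec (chainApply A bus (s + 1) t u) := by
  rw [chainApply, dif_pos h]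

lemma chainApply_smul (A : ℕ → Matrix (Fin 2) (Fin 2) ℝ) (bus : ℕ → ℕ) (s t : ℕ)
    (e : ℝ) (u : Fin 2 → ℝ) :
    chainApply A bus s t (e • u) = e • chainApply A bus s t u := by
  by_cases h : s < t
  · rw [chainApply_of_lt A bus h, chainApply_of_lt A bus h,
      chainApply_smul A bus (s+1) t e u, Matrix.mulVec_smul]
  · rw [chainApply_of_not_lt A bus h, chainApply_of_not_lt A bus h]
termination_by t - s

/-- Key expansion: the difference of two chains as a sum of one-step perturbations. -/
lemma chain_sub (A A' : ℕ → Matrix (Fin 2) (Fin 2) ℝ) (bus : ℕ → ℕ) :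
    ∀ s t : ℕ, s ≤ t → ∀ w : Fin 2 → ℝ,
    chainApply A bus s t w - chainApply A' bus s t w =
      ∑ σ ∈ Finset.Ico s t, chainApply A bus s σ
        ((A (bus σ) - A' (bus σ)).mulVec (chainApply A' bus (σ + 1) t w)) := by
  intro s t
  induction' hm : t - s with m IH generalizing s
  · intro hst w
    have hst' : s = t := by omega
    subst hst'
    simp [chainApply_of_not_lt A bus (lt_irrefl s), chainApply_of_not_lt A' bus (lt_irrefl s)]
  · intro hst w
    have hst2 : s < t := by omega
    rw [chainApply_of_lt A bus hst2, chainApply_of_lt A' bus hst2]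
    have hsplit :
        (A (bus s)).mulVec (chainApply A bus (s+1) t w)
          - (A' (bus s)).mulVec (chainApply A' bus (s+1) t w)
        = (A (bus s)).mulVec
            (chainApply A bus (s+1) t w - chainApply A' bus (s+1) t w)
          + (A (bus s) - A' (bus s)).mulVec (chainApply A' bus (s+1) t w) := by
      rw [Matrix.mulVec_sub, Matrix.sub_mulVec]
      abel
    rw [hsplit, IH (s+1) (by omega) (by omega) w]
    rw [Finset.sum_eq_sum_Ico_succ_bot hst2]
    rw [chainApply_of_not_lt A bus (lt_irrefl s)]
    rw [show ∀ (M : Matrix (Fin 2) (Fin 2) ℝ) (f : ℕ → Fin 2 → ℝ),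
          M.mulVec (∑ σ ∈ Finset.Ico (s+1) t, f σ)
            = ∑ σ ∈ Finset.Ico (s+1) t, M.mulVec (f σ) from fun M f => by
        have h := map_sum M.mulVecLin f (Finset.Ico (s+1) t)
        simp only [Matrix.mulVecLin_apply] at h
        exact h]
    rw [add_comm]
    congr 1
    refine Finset.sum_congr rfl (fun σ hσ => ?_)
    have hsσ : s < σ := (Finset.mem_Ico.1 hσ).1
    rw [chainApply_of_lt A bus hsσ]

/-- Rank-one form of the difference of the `A` matrices. -/
lemma Amat_sub_mulVec (n : ℕ) (par : ℕ → ℕ) (r x vlow p q p' q' : ℕ → ℝ) (i : ℕ)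
    (v : Fin 2 → ℝ) :
    (Amat n par r x vlow p q i - Amat n par r x vlow p' q' i).mulVec v =
      ((2 / vlow i) * ((max (hatP n par p' i) 0 - max (hatP n par p i) 0) * v 0
        + (max (hatP n par q' i) 0 - max (hatP n par q i) 0) * v 1)) • uvec r x i := by
  funext a
  fin_cases a <;>
    simp [Amat, Matrix.mulVec, dotProduct, uvec, Fin.sum_univ_two,
      Matrix.sub_apply, Matrix.smul_apply, Matrix.one_apply] <;> ring

lemma hatP_mono (n : ℕ) (par : ℕ → ℕ) (p p' : ℕ → ℝ)
    (hp : ∀ i, 1 ≤ i → i ≤ n → p i ≤ p' i) (i : ℕ) :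
    hatP n par p i ≤ hatP n par p' i := by
  refine Finset.sum_le_sum (fun h hh => ?_)
  have := Finset.mem_Icc.1 (Finset.mem_filter.1 hh).1
  exact hp h this.1 this.2

lemma iterate_par_le (par : ℕ → ℕ) (hpar0 : par 0 = 0) (hpar : ∀ i, 1 ≤ i → par i < i) :
    ∀ k l, par^[k] l ≤ l := by
  intro k
  induction' k with k IH
  · intro l; simp
  · intro l
    rw [Function.iterate_succ_apply']
    rcases Nat.eq_zero_or_pos (par^[k] l) with h | h
    · rw [h, hpar0]; exact Nat.zero_le _
    · exact le_trans (le_of_lt (hpar _ h)) (IH l)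

lemma exists_iterate_zero (par : ℕ → ℕ) (hpar0 : par 0 = 0) (hpar : ∀ i, 1 ≤ i → par i < i) :
    ∀ l, ∃ k, par^[k] l = 0 := by
  intro l
  induction' l using Nat.strong_induction_on with l IH
  rcases Nat.eq_zero_or_pos l with h | h
  · exact ⟨0, h⟩
  · obtain ⟨k, hk⟩ := IH (par l) (hpar l h)
    exact ⟨k + 1, by rw [Function.iterate_succ_apply, hk]⟩

lemma depth_iterate (par : ℕ → ℕ) (hpar0 : par 0 = 0) (hpar : ∀ i, 1 ≤ i → par i < i)
    (l : ℕ) : par^[depth par l] l = 0 := by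
  rw [depth, dif_pos (exists_iterate_zero par hpar0 hpar l)]
  exact Nat.find_spec (exists_iterate_zero par hpar0 hpar l)

lemma depth_min (par : ℕ → ℕ) (hpar0 : par 0 = 0) (hpar : ∀ i, 1 ≤ i → par i < i)
    (l : ℕ) {j : ℕ} (hj : j < depth par l) : par^[j] l ≠ 0 := by
  rw [depth, dif_pos (exists_iterate_zero par hpar0 hpar l)] at hj
  exact Nat.find_min (exists_iterate_zero par hpar0 hpar l) hj

/-- Proposition 2 (monotonicity of C1 in the injection bounds): if `(p̄,q̄) ≤ (p̄',q̄')`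
componentwise and C1 holds for `(r,x,p̄',q̄',v̲)`, then C1 holds for `(r,x,p̄,q̄,v̲)`. -/
theorem c1_monotone (n : ℕ) (par : ℕ → ℕ) (r x vlow p q p' q' : ℕ → ℝ)
    (hpar0 : par 0 = 0) (hpar : ∀ i, 1 ≤ i → par i < i)
    (hr : ∀ i, 1 ≤ i → i ≤ n → 0 < r i) (hx : ∀ i, 1 ≤ i → i ≤ n → 0 < x i)
    (hv : ∀ i, 1 ≤ i → i ≤ n → 0 < vlow i)
    (hp : ∀ i, 1 ≤ i → i ≤ n → p i ≤ p' i) (hq : ∀ i, 1 ≤ i → i ≤ n → q i ≤ q' i)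
    (hC1' : C1 n par r x vlow p' q') :
    C1 n par r x vlow p q := by
  intro l hleaf s t hs hst htd a
  set D := depth par l with hD
  set bus : ℕ → ℕ := fun k => par^[depth par l - k] l with hbus
  have hbus_ge : ∀ k, 1 ≤ k → k ≤ D → 1 ≤ bus k := by
    intro k hk1 hkD
    have hlt : D - k < D := by omega
    have := depth_min par hpar0 hpar l hlt
    simp only [hbus, ← hD]
    omega
  have hbus_le : ∀ k, bus k ≤ n := fun k =>
    le_trans (iterate_par_le par hpar0 hpar _ l) hleaf.2.1
  have main : ∀ t, t ≤ D → ∀ s, 1 ≤ s → s ≤ t → ∀ a,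
      chainApply (Amat n par r x vlow p' q') bus s t (uvec r x (bus t)) a
        ≤ chainApply (Amat n par r x vlow p q) bus s t (uvec r x (bus t)) a := by
    intro t
    induction' t using Nat.strong_induction_on with t IHt
    intro htD s hs1 hst1 a
    have hsub := congrFun (chain_sub (Amat n par r x vlow p q)
      (Amat n par r x vlow p' q') bus s t hst1 (uvec r x (bus t))) a
    rw [Pi.sub_apply] at hsub
    have hsum : 0 ≤ chainApply (Amat n par r x vlow p q) bus s t (uvec r x (bus t)) a
        - chainApply (Amat n par r x vlow p' q') bus s t (uvec r x (bus t)) a := by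
      rw [hsub, Finset.sum_apply]
      refine Finset.sum_nonneg (fun σ hσ => ?_)
      obtain ⟨hsσ, hσt⟩ := Finset.mem_Ico.1 hσ
      have hσ1 : 1 ≤ σ := le_trans hs1 hsσ
      have hσD : σ ≤ D := le_trans (le_of_lt hσt) htD
      have hvpos : ∀ b, 0 < chainApply (Amat n par r x vlow p' q') bus (σ+1) t
          (uvec r x (bus t)) b :=
        fun b => hC1' l hleaf (σ+1) t (by omega) (by omega) htD b
      rw [Amat_sub_mulVec, chainApply_smul, Pi.smul_apply, smul_eq_mul]
      have hvl : 0 < vlow (bus σ) := hv _ (hbus_ge σ hσ1 hσD) (hbus_le σ)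
      have hmaxp : max (hatP n par p (bus σ)) 0 ≤ max (hatP n par p' (bus σ)) 0 :=
        max_le_max (hatP_mono n par p p' hp _) le_rfl
      have hmaxq : max (hatP n par q (bus σ)) 0 ≤ max (hatP n par q' (bus σ)) 0 :=
        max_le_max (hatP_mono n par q q' hq _) le_rfl
      have he : 0 ≤ (2 / vlow (bus σ)) *
          ((max (hatP n par p' (bus σ)) 0 - max (hatP n par p (bus σ)) 0) *
              chainApply (Amat n par r x vlow p' q') bus (σ+1) t (uvec r x (bus t)) 0
            + (max (hatP n par q' (bus σ)) 0 - max (hatP n par q (bus σ)) 0) *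
              chainApply (Amat n par r x vlow p' q') bus (σ+1) t (uvec r x (bus t)) 1) := by
        have h0 := hvpos 0
        have h1 := hvpos 1
        have := div_nonneg (by norm_num : (0:ℝ) ≤ 2) (le_of_lt hvl)
        refine mul_nonneg this (add_nonneg (mul_nonneg (by linarith) (le_of_lt h0))
          (mul_nonneg (by linarith) (le_of_lt h1)))
      have hcp : 0 < chainApply (Amat n par r x vlow p q) bus s σ (uvec r x (bus σ)) a :=
        lt_of_lt_of_le (hC1' l hleaf s σ hs1 hsσ hσD a) (IHt σ hσt hσD s hs1 hsσ a)
      exact mul_nonneg he (le_of_lt hcp)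
    linarith
  exact lt_of_lt_of_le (hC1' l hleaf s t hs hst htd a) (main t htd s hs hst a)
end
end

section
/- (Uniqueness of the exact SOCP solution.) Let w̃ = (s̃, S̃, ṽ, ℓ̃, s̃₀) and ŵ = (ŝ, Ŝ, v̂, ℓ̂, ŝ₀) be two solutions of a convex SOCP relaxation that are both exact, i.e., ṽ_i ℓ̃_ij = |S̃_ij|² and v̂_i ℓ̂_ij = |Ŝ_ij|² for every line (i,j), with ṽ_i, v̂_i > 0. Suppose their midpoint w = (w̃ + ŵ)/2 is also exact: v_i ℓ_ij = |S_ij|² for all (i,j) where v = (ṽ+v̂)/2, ℓ = (ℓ̃+ℓ̂)/2, S = (S̃+Ŝ)/2. Suppose further both satisfy the branch flow equations S_ij = s_i + Σ_{h→i}(S_hi − z_hi ℓ_hi) and v_i − v_j = 2Re(z̄_ij S_ij) − |z_ij|² ℓ_ij with the same fixed root voltage v₀ and the same injections s̃ = ŝ, on a connected tree network. Then w̃ = ŵ. -/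
open Classical Finset

noncomputable section

set_option maxHeartbeats 1000000

/-- Theorem 3 (uniqueness of the exact SOCP solution): on a connected tree network with fixed
root voltage `v₀` and the same injections, two branch-flow solutions that are exact
(`v_i ℓ_{ij} = |S_{ij}|²` on every line) and whose midpoint is also exact must coincide. -/
theorem exact_solution_unique (n : ℕ) (par : ℕ → ℕ)
    (hpar0 : par 0 = 0) (hpar : ∀ i, 1 ≤ i → par i < i)
    (z : ℕ → ℂ) (v0 : ℝ) (hv0 : 0 < v0)
    (st sh St Sh : ℕ → ℂ) (vt vh lt lh : ℕ → ℝ) (s0t s0h : ℂ)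
    -- same injections
    (hs : ∀ i, 1 ≤ i → i ≤ n → st i = sh i)
    -- positivity of voltages and nonnegativity of currents
    (hvtpos : ∀ i, i ≤ n → 0 < vt i) (hvhpos : ∀ i, i ≤ n → 0 < vh i)
    (hltpos : ∀ i, 1 ≤ i → i ≤ n → 0 ≤ lt i) (hlhpos : ∀ i, 1 ≤ i → i ≤ n → 0 ≤ lh i)
    -- fixed root voltage
    (hvt0 : vt 0 = v0) (hvh0 : vh 0 = v0)
    -- branch flow equations for the first solution
    (hSt : ∀ i, 1 ≤ i → i ≤ n →
      St i = st i + ∑ h ∈ (Finset.Icc 1 n).filter (fun h => par h = i),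
        (St h - z h * (lt h : ℂ)))
    (hs0t : 0 = s0t + ∑ h ∈ (Finset.Icc 1 n).filter (fun h => par h = 0),
        (St h - z h * (lt h : ℂ)))
    (hvt : ∀ i, 1 ≤ i → i ≤ n →
      vt i - vt (par i) = 2 * ((starRingEnd ℂ) (z i) * St i).re - ‖z i‖ ^ 2 * lt i)
    -- branch flow equations for the second solution
    (hSh : ∀ i, 1 ≤ i → i ≤ n →
      Sh i = sh i + ∑ h ∈ (Finset.Icc 1 n).filter (fun h => par h = i),
        (Sh h - z h * (lh h : ℂ)))
    (hs0h : 0 = s0h + ∑ h ∈ (Finset.Icc 1 n).filter (fun h => par h = 0),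
        (Sh h - z h * (lh h : ℂ)))
    (hvh : ∀ i, 1 ≤ i → i ≤ n →
      vh i - vh (par i) = 2 * ((starRingEnd ℂ) (z i) * Sh i).re - ‖z i‖ ^ 2 * lh i)
    -- exactness of both solutions
    (hext : ∀ i, 1 ≤ i → i ≤ n → vt i * lt i = ‖St i‖ ^ 2)
    (hexh : ∀ i, 1 ≤ i → i ≤ n → vh i * lh i = ‖Sh i‖ ^ 2)
    -- exactness of the midpoint
    (hmid : ∀ i, 1 ≤ i → i ≤ n →
      ((vt i + vh i) / 2) * ((lt i + lh i) / 2) = ‖(St i + Sh i) / 2‖ ^ 2) :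
    (∀ i, 1 ≤ i → i ≤ n → St i = Sh i ∧ vt i = vh i ∧ lt i = lh i) ∧ s0t = s0h := by

  have key : ∀ i, i ≤ n → vt i = vh i ∧ (1 ≤ i → St i = Sh i ∧ lt i = lh i) := by
    intro i
    induction i using Nat.strong_induction_on with
    | _ i IH =>
      intro hin
      rcases Nat.eq_zero_or_pos i with rfl | hi1
      · exact ⟨hvt0.trans hvh0.symm, by omega⟩
      · have hpari : par i < i := hpar i hi1
        have hparle : par i ≤ n := le_trans (le_of_lt hpari) hin
        have hc : vt (par i) = vh (par i) := (IH (par i) hpari hparle).1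
        have ha : 0 < vt i := hvtpos i hin
        have hb : 0 < vh i := hvhpos i hin
        set A := ‖St i‖ with hAdef
        set B := ‖Sh i‖ with hBdef
        have hA : vt i * lt i = A ^ 2 := hext i hi1 hin
        have hB : vh i * lh i = B ^ 2 := hexh i hi1 hin
        have hAnn : 0 ≤ A := norm_nonneg _
        have hBnn : 0 ≤ B := norm_nonneg _
        -- expand the midpoint exactness
        have hcross : vt i * lh i + vh i * lt i
            = 2 * (St i * (starRingEnd ℂ) (Sh i)).re := by
          have h := hmid i hi1 hin
          have habs : ‖(St i + Sh i) / 2‖ = ‖St i + Sh i‖ / 2 := by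
            rw [norm_div, Complex.norm_two]
          rw [habs] at h
          have hns : ‖St i + Sh i‖ ^ 2
              = A ^ 2 + B ^ 2 + 2 * (St i * (starRingEnd ℂ) (Sh i)).re := by
            rw [Complex.sq_norm, Complex.normSq_add, ← Complex.sq_norm, ← Complex.sq_norm]
          nlinarith [h, hns, hA, hB]
        have hRle : (St i * (starRingEnd ℂ) (Sh i)).re ≤ A * B := by
          calc (St i * (starRingEnd ℂ) (Sh i)).re
              ≤ ‖St i * (starRingEnd ℂ) (Sh i)‖ := Complex.re_le_norm _
            _ = A * B := by rw [norm_mul, Complex.norm_conj]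
        have h6 : vt i * lh i + vh i * lt i ≤ 2 * (A * B) := by linarith
        have h7 : (vt i * lh i + vh i * lt i) * (vt i * vh i)
            ≤ 2 * (A * B) * (vt i * vh i) :=
          mul_le_mul_of_nonneg_right h6 (mul_pos ha hb).le
        have h8 : (vt i * B - vh i * A) ^ 2
            = (vt i * lh i + vh i * lt i) * (vt i * vh i)
              - 2 * (A * B) * (vt i * vh i)
              + (vt i * B - vh i * A) * (vt i * B - vh i * A)
              - ((vt i * B) ^ 2 + (vh i * A) ^ 2 - 2 * (vt i * B) * (vh i * A)) := by
          linear_combination (-(vt i) ^ 2) * hB - (vh i) ^ 2 * hA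
        have hsq : (vt i * B - vh i * A) ^ 2 ≤ 0 := by nlinarith [h7, h8]
        have hABeq : vt i * B = vh i * A := by
          have h0 : (vt i * B - vh i * A) ^ 2 = 0 := le_antisymm hsq (sq_nonneg _)
          have := pow_eq_zero_iff (two_ne_zero) |>.mp h0
          linarith [sub_eq_zero.mp this]
        have h9 : 2 * (St i * (starRingEnd ℂ) (Sh i)).re * (vt i * vh i)
            = 2 * (A * B) * (vt i * vh i) := by
          linear_combination (-(vt i * vh i)) * hcross + (vt i) ^ 2 * hB
            + (vh i) ^ 2 * hA + (vt i * B - vh i * A) * hABeq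
        have hReq : (St i * (starRingEnd ℂ) (Sh i)).re = A * B := by
          have h10 := mul_right_cancel₀ (ne_of_gt (mul_pos ha hb)) h9
          linarith
        -- the product St * conj Sh is a nonnegative real
        have hz : St i * (starRingEnd ℂ) (Sh i) = ((A * B : ℝ) : ℂ) := by
          have habs2 : ‖St i * (starRingEnd ℂ) (Sh i)‖ = A * B := by
            rw [norm_mul, Complex.norm_conj]
          have hsqab := Complex.sq_norm (St i * (starRingEnd ℂ) (Sh i))
          rw [habs2, Complex.normSq_apply] at hsqab
          have him : (St i * (starRingEnd ℂ) (Sh i)).im = 0 := by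
            have hR2 : (St i * (starRingEnd ℂ) (Sh i)).re * (St i * (starRingEnd ℂ) (Sh i)).re
                = (A * B) * (A * B) := by rw [hReq]
            have him2 : (St i * (starRingEnd ℂ) (Sh i)).im
                * (St i * (starRingEnd ℂ) (Sh i)).im = 0 := by
              nlinarith [hsqab, hR2]
            exact mul_self_eq_zero.mp him2
          apply Complex.ext
          · simpa using hReq
          · simpa using him
        -- proportionality of power flows
        have hprop : (vh i : ℂ) * St i = (vt i : ℂ) * Sh i := by
          by_cases hSh0 : Sh i = 0
          · have hB0 : B = 0 := by rw [hBdef, hSh0, norm_zero]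
            have hA0 : A = 0 := by
              have := hABeq
              rw [hB0] at this
              nlinarith
            have hSt0 : St i = 0 := by
              rwa [hAdef, norm_eq_zero] at hA0
            rw [hSt0, hSh0, mul_zero, mul_zero]
          · have hBpos : 0 < B := norm_pos_iff.mpr hSh0
            have hBne : ((B : ℂ)) ^ 2 ≠ 0 :=
              pow_ne_zero 2 (Complex.ofReal_ne_zero.mpr hBpos.ne')
            have hc2 : (starRingEnd ℂ) (Sh i) * Sh i = ((B : ℂ)) ^ 2 := by
              rw [mul_comm, Complex.mul_conj, Complex.normSq_eq_norm_sq, ← hBdef]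
              push_cast
              ring
            have h1 : St i * ((B : ℂ)) ^ 2 = ((A : ℝ) : ℂ) * ((B : ℝ) : ℂ) * Sh i :=
              calc St i * ((B : ℂ)) ^ 2
                  = St i * ((starRingEnd ℂ) (Sh i) * Sh i) := by rw [hc2]
                _ = (St i * (starRingEnd ℂ) (Sh i)) * Sh i := by ring
                _ = ((A * B : ℝ) : ℂ) * Sh i := by rw [hz]
                _ = ((A : ℝ) : ℂ) * ((B : ℝ) : ℂ) * Sh i := by push_cast; ring
            have hABc : (vt i : ℂ) * (B : ℂ) = (vh i : ℂ) * (A : ℂ) := by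
              have := congrArg (fun x : ℝ => (x : ℂ)) hABeq
              push_cast at this
              exact this
            apply mul_right_cancel₀ hBne
            linear_combination (vh i : ℂ) * h1 - (B : ℂ) * Sh i * hABc
        -- proportionality of currents
        have hlq : vt i * lh i = vh i * lt i := by
          have h3 : vt i * lh i * (vt i * vh i) = vh i * lt i * (vt i * vh i) := by
            linear_combination (vt i) ^ 2 * hB - (vh i) ^ 2 * hA
              + (vt i * B + vh i * A) * hABeq
          exact mul_right_cancel₀ (ne_of_gt (mul_pos ha hb)) h3
        -- compare the voltage equations
        have hre : vt i * ((starRingEnd ℂ) (z i) * Sh i).re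
            = vh i * ((starRingEnd ℂ) (z i) * St i).re := by
          have h4 : (vt i : ℂ) * ((starRingEnd ℂ) (z i) * Sh i)
              = (vh i : ℂ) * ((starRingEnd ℂ) (z i) * St i) := by
            linear_combination (starRingEnd ℂ) (z i) * hprop.symm
          have h5 := congrArg Complex.re h4
          simpa [Complex.re_ofReal_mul] using h5
        have hEt := hvt i hi1 hin
        have hEh := hvh i hi1 hin
        rw [← hc] at hEh
        have hcpos : 0 < vt (par i) := hvtpos (par i) hparle
        have h5 : vt i * (vh i - vt (par i)) = vh i * (vt i - vt (par i)) := by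
          rw [hEh, hEt]
          linear_combination 2 * hre - ‖z i‖ ^ 2 * hlq
        have hac : vt i * vt (par i) = vh i * vt (par i) := by linear_combination (-1 : ℝ) * h5
        have hab : vt i = vh i := mul_right_cancel₀ (ne_of_gt hcpos) hac
        refine ⟨hab, fun _ => ?_⟩
        constructor
        · have : (vh i : ℂ) * St i = (vh i : ℂ) * Sh i := by rw [hprop, hab]
          exact mul_left_cancel₀ (by exact_mod_cast hb.ne') this
        · have h11 := hlq
          rw [hab] at h11
          exact (mul_left_cancel₀ hb.ne' h11).symm
  constructor
  · intro i h1 h2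
    obtain ⟨hv, hSl⟩ := key i h2
    obtain ⟨hS, hl⟩ := hSl h1
    exact ⟨hS, hv, hl⟩
  · have hsum : ∑ h ∈ (Finset.Icc 1 n).filter (fun h => par h = 0),
        (St h - z h * (lt h : ℂ))
        = ∑ h ∈ (Finset.Icc 1 n).filter (fun h => par h = 0),
        (Sh h - z h * (lh h : ℂ)) := by
      refine Finset.sum_congr rfl fun h hh => ?_
      have hmem := (Finset.mem_filter.mp hh).1
      obtain ⟨hh1, hh2⟩ := Finset.mem_Icc.mp hmem
      obtain ⟨_, hSl⟩ := key h hh2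
      obtain ⟨hS, hl⟩ := hSl hh1
      rw [hS, hl]
    linear_combination -hs0t + hs0h - hsum
end
end

section
/- (Key positivity step in the exactness proof.) Let u₂ = (r₂₁, x₂₁)ᵀ > 0 and A̲₁ = I − (2/v̲₁)(r₁₀, x₁₀)ᵀ (P̂⁺₁₀, Q̂⁺₁₀) with A̲₁ u₂ > 0 componentwise. Let B₁ = I − (2/v₁)(r₁₀, x₁₀)ᵀ ((P₁₀+P₁₀′)/2, (Q₁₀+Q₁₀′)/2). Assume v₁ ≥ v̲₁ > 0, P₁₀ ≤ P̂⁺₁₀, P₁₀′ ≤ P̂⁺₁₀, Q₁₀ ≤ Q̂⁺₁₀, Q₁₀′ ≤ Q̂⁺₁₀, with P̂⁺₁₀ ≥ 0, Q̂⁺₁₀ ≥ 0, and r₁₀, x₁₀ > 0. Then B₁ u₂ > 0 componentwise. -/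
noncomputable section

/-- Key positivity step in the exactness proof: with `u₂ = (r₂₁, x₂₁)ᵀ > 0`,
`A̲₁ = I − (2/v̲₁)(r₁₀,x₁₀)ᵀ(P̂⁺₁₀, Q̂⁺₁₀)` satisfying `A̲₁u₂ > 0`, and
`B₁ = I − (2/v₁)(r₁₀,x₁₀)ᵀ((P₁₀+P₁₀′)/2, (Q₁₀+Q₁₀′)/2)`, where `v₁ ≥ v̲₁ > 0`,
`P₁₀, P₁₀′ ≤ P̂⁺₁₀`, `Q₁₀, Q₁₀′ ≤ Q̂⁺₁₀` with `P̂⁺₁₀, Q̂⁺₁₀ ≥ 0` and `r₁₀, x₁₀ > 0`,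
one has `B₁u₂ > 0` componentwise. -/
theorem B_positive (r10 x10 r21 x21 v1 vl1 Phat Qhat P P' Q Q' : ℝ)
    (hr10 : 0 < r10) (hx10 : 0 < x10) (hr21 : 0 < r21) (hx21 : 0 < x21)
    (hvl : 0 < vl1) (hv1 : vl1 ≤ v1)
    (hPhat : 0 ≤ Phat) (hQhat : 0 ≤ Qhat)
    (hP : P ≤ Phat) (hP' : P' ≤ Phat) (hQ : Q ≤ Qhat) (hQ' : Q' ≤ Qhat)
    (hA : ∀ a, 0 <
      ((1 : Matrix (Fin 2) (Fin 2) ℝ)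
          - (2 / vl1) • Matrix.of (fun i j => ![r10, x10] i * ![Phat, Qhat] j)).mulVec
        ![r21, x21] a) :
    ∀ a, 0 <
      ((1 : Matrix (Fin 2) (Fin 2) ℝ)
          - (2 / v1) • Matrix.of
              (fun i j => ![r10, x10] i * ![(P + P') / 2, (Q + Q') / 2] j)).mulVec
        ![r21, x21] a := by
  have hv1' : 0 < v1 := lt_of_lt_of_le hvl hv1
  have h0 := hA 0
  have h1 := hA 1
  simp [Matrix.mulVec, Matrix.sub_apply, Matrix.one_apply, Fin.sum_univ_two,
    dotProduct, Matrix.smul_apply] at h0 h1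
  have key : 2 / v1 * ((P + P') / 2 * r21 + (Q + Q') / 2 * x21)
      ≤ 2 / vl1 * (Phat * r21 + Qhat * x21) := by
    have hST : (P + P') / 2 * r21 + (Q + Q') / 2 * x21 ≤ Phat * r21 + Qhat * x21 := by
      nlinarith
    have hSnn : (0:ℝ) ≤ Phat * r21 + Qhat * x21 := by positivity
    rcases le_total ((P + P') / 2 * r21 + (Q + Q') / 2 * x21) 0 with h | h
    · have h2 : 2 / v1 * ((P + P') / 2 * r21 + (Q + Q') / 2 * x21) ≤ 0 :=
        mul_nonpos_of_nonneg_of_nonpos (by positivity) h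
      have h3 : (0:ℝ) ≤ 2 / vl1 * (Phat * r21 + Qhat * x21) := by positivity
      linarith
    · calc 2 / v1 * ((P + P') / 2 * r21 + (Q + Q') / 2 * x21)
          ≤ 2 / vl1 * ((P + P') / 2 * r21 + (Q + Q') / 2 * x21) := by gcongr
        _ ≤ 2 / vl1 * (Phat * r21 + Qhat * x21) := by gcongr
  intro a
  fin_cases a <;>
    simp [Matrix.mulVec, Matrix.sub_apply, Matrix.one_apply, Fin.sum_univ_two,
      dotProduct, Matrix.smul_apply] <;>
    nlinarith [mul_le_mul_of_nonneg_left key hr10.le, mul_le_mul_of_nonneg_left key hx10.le]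
end
end
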